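/- Let M be a cuspidal Zg-module. For all m,n ∈ R and r,s ∉ R the following identities of operators on M hold: (i) [D(m), D(n)] = (γ|n)(D(m+n) − D(n)) − (γ|m)(D(m+n) − D(m)); (ii) [D(m), D(n,s)] = (γ|n+s) D(m+n, s) − (γ|n) D(n,s); (iii) if r+s ∉ R then [D(m,r), D(n,s)] = (σ(r,s) − σ(s,r)) D(m+n, r+s), while if r+s ∈ R then σ(r,s) = σ(s,r) and [D(m,r), D(n,s)] = 0. -/

import Mathlib

open scoped BigOperators

noncomputable section

/-- The index `2i-1` (1-based), i.e. `2i` (0-based). -/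
def p1 {d z : ℕ} (h : 2*z ≤ d) (i : Fin z) : Fin d := ⟨2*(i:ℕ), by have := i.2; omega⟩

/-- The index `2i` (1-based), i.e. `2i+1` (0-based). -/
def p2 {d z : ℕ} (h : 2*z ≤ d) (i : Fin z) : Fin d := ⟨2*(i:ℕ)+1, by have := i.2; omega⟩

/-- `σ(m,n) = ∏_i q_i^{n_{2i} m_{2i-1}}`. -/
def qsigma {d z : ℕ} (h : 2*z ≤ d) (q : Fin z → ℂ) (m n : Fin d → ℤ) : ℂ :=
  ∏ i : Fin z, q i ^ (n (p2 h i) * m (p1 h i))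

/-- The subgroup `R = ⊕ (ℤ k_i e_{2i-1} ⊕ ℤ k_i e_{2i}) ⊕ ⊕_{l > 2z} ℤ e_l` of `ℤ^d`. -/
def Rgrp {d z : ℕ} (h : 2*z ≤ d) (k : Fin z → ℕ) : AddSubgroup (Fin d → ℤ) where
  carrier := {m | ∀ i : Fin z, ((k i : ℤ) ∣ m (p1 h i)) ∧ ((k i : ℤ) ∣ m (p2 h i))}
  zero_mem' := fun i => ⟨dvd_zero _, dvd_zero _⟩
  add_mem' := fun ha hb i => ⟨dvd_add (ha i).1 (hb i).1, dvd_add (ha i).2 (hb i).2⟩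
  neg_mem' := fun ha i => ⟨dvd_neg.mpr (ha i).1, dvd_neg.mpr (ha i).2⟩

/-- Membership in the set `Γ₀` of distinguished coset representatives for `ℤ^d/R`. -/
def inGamma0 {d z : ℕ} (h : 2*z ≤ d) (k : Fin z → ℕ) (n : Fin d → ℤ) : Prop :=
  (∀ i : Fin z, 0 ≤ n (p1 h i) ∧ n (p1 h i) < k i ∧ 0 ≤ n (p2 h i) ∧ n (p2 h i) < k i) ∧
  ∀ l : Fin d, 2*z ≤ (l:ℕ) → n l = 0

/-- The representative in `Γ₀` of the coset `n + R`. -/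
def repZ {d z : ℕ} (h : 2*z ≤ d) (k : Fin z → ℕ) (n : Fin d → ℤ) : Fin d → ℤ :=
  fun l => if hl : (l:ℕ) < 2*z then n l % (k ⟨(l:ℕ)/2, by omega⟩ : ℤ) else 0

/-- `(γ|m) = ∑ γ_i m_i`. -/
def ginner {d : ℕ} (γ : Fin d → ℂ) (m : Fin d → ℤ) : ℂ := ∑ i, γ i * (m i : ℂ)

/-- The matrix `X^n = ⊗_i X_{2i-1}^{n_{2i-1}} X_{2i}^{n_{2i}} ∈ gl_N`, realized on the
index set `∏_i Fin (k_i)` (of cardinality `N = k_1 ⋯ k_z`). -/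
def Xmat {d z : ℕ} (h : 2*z ≤ d) (k : Fin z → ℕ) (q : Fin z → ℂ) (n : Fin d → ℤ) :
    Matrix ((i : Fin z) → Fin (k i)) ((i : Fin z) → Fin (k i)) ℂ :=
  Matrix.of fun j l => ∏ i : Fin z,
    (q i ^ (n (p1 h i) * (j i : ℤ)) *
      (if (l i : ℤ) = ((j i : ℤ) + n (p2 h i)) % (k i) then 1 else 0))

lemma repZ_mem {d z : ℕ} (h : 2*z ≤ d) (k : Fin z → ℕ) (hk : ∀ i, 0 < k i)
    (n : Fin d → ℤ) : inGamma0 h k (repZ h k n) := by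
  constructor
  · intro i
    have h1 : ((p1 h i : ℕ)) < 2*z := by simp only [p1]; have := i.2; omega
    have h2 : ((p2 h i : ℕ)) < 2*z := by simp only [p2]; have := i.2; omega
    have e1 : (⟨((p1 h i : ℕ))/2, by omega⟩ : Fin z) = i := by
      apply Fin.ext; simp only [p1]; omega
    have e2 : (⟨((p2 h i : ℕ))/2, by omega⟩ : Fin z) = i := by
      apply Fin.ext; simp only [p2]; omega
    have hk' : (0:ℤ) < (k i : ℤ) := by exact_mod_cast hk i
    refine ⟨?_, ?_, ?_, ?_⟩ <;> simp only [repZ, dif_pos h1, dif_pos h2, e1, e2]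
    · exact Int.emod_nonneg _ (by exact_mod_cast (hk i).ne')
    · exact Int.emod_lt_of_pos _ hk'
    · exact Int.emod_nonneg _ (by exact_mod_cast (hk i).ne')
    · exact Int.emod_lt_of_pos _ hk'
  · intro l hl
    simp only [repZ, dif_neg (by omega : ¬ (l:ℕ) < 2*z)]

/-- A family of operators is a weight module with uniformly bounded finite-dimensional
weight spaces (cuspidality), with respect to the Cartan operator `L0`. -/
def IsCuspidalFor {M : Type*} [AddCommGroup M] [Module ℂ M] (L0 : Module.End ℂ M) : Prop :=
  ((⨆ c : ℂ, Module.End.eigenspace L0 c) = ⊤) ∧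
  (∀ c : ℂ, FiniteDimensional ℂ (Module.End.eigenspace L0 c)) ∧
  ∃ B : ℕ, ∀ c : ℂ, Module.finrank ℂ (Module.End.eigenspace L0 c) ≤ B

/-- The defining bracket relations of the solenoidal Lie algebra `g` over the rational
quantum torus, for a family of operators `L` (i.e. `M` is a `g`-module). -/
def GRel {d z : ℕ} (h : 2*z ≤ d) (k : Fin z → ℕ) (q : Fin z → ℂ) (γ : Fin d → ℂ)
    {M : Type*} [AddCommGroup M] [Module ℂ M] (L : (Fin d → ℤ) → Module.End ℂ M) : Prop :=
  (∀ m n, m ∈ Rgrp h k → n ∈ Rgrp h k → ⁅L m, L n⁆ = (ginner γ (n - m)) • L (m + n)) ∧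
  (∀ m s, m ∈ Rgrp h k → s ∉ Rgrp h k → ⁅L m, L s⁆ = (ginner γ s) • L (m + s)) ∧
  (∀ r s, r ∉ Rgrp h k → s ∉ Rgrp h k →
    ⁅L r, L s⁆ = (qsigma h q r s - qsigma h q s r) • L (r + s))

/-- The relations making `(L, T)` a `Zg`-module structure: `Z` acts associatively and the
semidirect-product brackets `[L_m, t^n] = (γ|n) t^{m+n}`, `[L_r, t^n] = 0` hold. -/
def ZRel {d z : ℕ} (h : 2*z ≤ d) (k : Fin z → ℕ) (γ : Fin d → ℂ)
    {M : Type*} [AddCommGroup M] [Module ℂ M] (L T : (Fin d → ℤ) → Module.End ℂ M) : Prop :=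
  (∀ m n, m ∈ Rgrp h k → n ∈ Rgrp h k → T m * T n = T (m + n)) ∧
  (T 0 = 1) ∧
  (∀ m n, m ∈ Rgrp h k → n ∈ Rgrp h k → ⁅L m, T n⁆ = (ginner γ n) • T (m + n)) ∧
  (∀ r n, r ∉ Rgrp h k → n ∈ Rgrp h k → ⁅L r, T n⁆ = 0)

/-- `subE v i = v - e_i` (with truncated subtraction in `ℕ^d`). -/
def subE {d : ℕ} (v : Fin d → ℕ) (i : Fin d) : Fin d → ℕ :=
  Function.update v i (v i - 1)

lemma subE_ne {d : ℕ} {m n : Fin d → ℕ} (hm : m ≠ 0) (hn : n ≠ 0) (i : Fin d) :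
    subE (m + n) i ≠ 0 := by
  intro h
  obtain ⟨j, hj⟩ : ∃ j, m j ≠ 0 := by
    by_contra hc; push_neg at hc; exact hm (funext fun j => hc j)
  obtain ⟨j', hj'⟩ : ∃ j', n j' ≠ 0 := by
    by_contra hc; push_neg at hc; exact hn (funext fun j => hc j)
  by_cases hji : j = i
  · by_cases hj'i : j' = i
    · rw [hji] at hj; rw [hj'i] at hj'
      have := congrFun h i
      simp only [subE, Function.update_self, Pi.add_apply, Pi.zero_apply] at this
      omega
    · have := congrFun h j'
      simp only [subE, Function.update_of_ne hj'i, Pi.add_apply, Pi.zero_apply] at this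
      omega
  · have := congrFun h j
    simp only [subE, Function.update_of_ne hji, Pi.add_apply, Pi.zero_apply] at this
    omega

/-- The index `e_i ∈ ℕ^d ∖ {0}`. -/
def eIdx {d : ℕ} (i : Fin d) : {m : Fin d → ℕ // m ≠ 0} :=
  ⟨fun j => if j = i then 1 else 0, by
    intro h
    have := congrFun h i
    simp at this⟩

/-- The defining bracket relations of the Lie algebra `𝓛^x`, spanned by the basis
`{x^m d_γ : m ∈ ℕ^d, m ≠ 0}` with `[x^m d_γ, x^n d_γ] = ∑ γ_i (n_i - m_i) x^{m+n-e_i} d_γ`. -/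
def LxRel {d : ℕ} (γ : Fin d → ℂ) {Lx : Type*} [LieRing Lx] [LieAlgebra ℂ Lx]
    (b : Module.Basis {m : Fin d → ℕ // m ≠ 0} ℂ Lx) : Prop :=
  ∀ m n : {m : Fin d → ℕ // m ≠ 0},
    ⁅b m, b n⁆ = ∑ i : Fin d,
      (γ i * ((n.1 i : ℂ) - (m.1 i : ℂ))) • b ⟨subE (m.1 + n.1) i, subE_ne m.2 n.2 i⟩


lemma zpow_eq_of_dvd {Q : ℂ} {K : ℕ} (hK : 0 < K) (hQ : Q ^ K = 1) {a b : ℤ}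
    (h : (K:ℤ) ∣ (a - b)) : Q ^ a = Q ^ b := by
  have hQ0 : Q ≠ 0 := by
    intro h0; rw [h0, zero_pow hK.ne'] at hQ; exact one_ne_zero hQ.symm
  obtain ⟨t, ht⟩ := h
  have hab : a = b + (K:ℤ) * t := by linarith
  rw [hab, zpow_add₀ hQ0, zpow_mul, zpow_natCast, hQ, one_zpow, mul_one]

lemma qsigma_congr {d z : ℕ} (h : 2*z ≤ d) (k : Fin z → ℕ) (hk : ∀ i, 0 < k i)
    (q : Fin z → ℂ) (hq : ∀ i, q i ^ (k i) = 1)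
    {m n : Fin d → ℤ} (r s : Fin d → ℤ)
    (hm : m ∈ Rgrp h k) (hn : n ∈ Rgrp h k) :
    qsigma h q (m + r) (n + s) = qsigma h q r s := by
  unfold qsigma
  refine Finset.prod_congr rfl fun i _ => ?_
  apply zpow_eq_of_dvd (hk i) (hq i)
  have h1 := (hm i).1
  have h2 := (hn i).2
  simp only [Pi.add_apply]
  have e : (n (p2 h i) + s (p2 h i)) * (m (p1 h i) + r (p1 h i)) - s (p2 h i) * r (p1 h i)
      = n (p2 h i) * (m (p1 h i) + r (p1 h i)) + s (p2 h i) * m (p1 h i) := by ring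
  rw [e]
  exact dvd_add (h2.mul_right _) (h1.mul_left _)

lemma qsigma_symm {d z : ℕ} (h : 2*z ≤ d) (k : Fin z → ℕ) (hk : ∀ i, 0 < k i)
    (q : Fin z → ℂ) (hq : ∀ i, q i ^ (k i) = 1)
    {r s : Fin d → ℤ} (hrs : r + s ∈ Rgrp h k) :
    qsigma h q r s = qsigma h q s r := by
  unfold qsigma
  refine Finset.prod_congr rfl fun i _ => ?_
  apply zpow_eq_of_dvd (hk i) (hq i)
  have h1 := (hrs i).1
  have h2 := (hrs i).2
  simp only [Pi.add_apply] at h1 h2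
  have e : s (p2 h i) * r (p1 h i) - r (p2 h i) * s (p1 h i)
      = (r (p2 h i) + s (p2 h i)) * r (p1 h i) - r (p2 h i) * (r (p1 h i) + s (p1 h i)) := by
    ring
  rw [e]
  exact dvd_sub (h2.mul_right _) (h1.mul_left _)

/-- Lemma 5.1.  Let `M` be a cuspidal `Zg`-module and set
`D(m) = t^{-m} ∘ L_m` and `D(m,r) = t^{-m} ∘ L_{m+r}` for `m ∈ R`, `r ∉ R`.  Then the
stated commutator identities hold among these operators. -/
theorem stmt10 (d z : ℕ) (hd : 0 < d) (hz : 0 < z) (h2z : 2*z ≤ d)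
    (k : Fin z → ℕ) (hk : ∀ i, 0 < k i)
    (q : Fin z → ℂ) (hq : ∀ i, IsPrimitiveRoot (q i) (k i))
    (hkdvd : ∀ (i : ℕ) (hi : i + 1 < z), k ⟨i+1, hi⟩ ∣ k ⟨i, by omega⟩)
    (γ : Fin d → ℂ) (hγ : LinearIndependent ℚ γ)
    (M : Type*) [AddCommGroup M] [Module ℂ M]
    (L T : (Fin d → ℤ) → Module.End ℂ M)
    (hg : GRel h2z k q γ L) (hZ : ZRel h2z k γ L T)
    (hcusp : IsCuspidalFor (L 0)) :
    -- (i)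
    (∀ m n, m ∈ Rgrp h2z k → n ∈ Rgrp h2z k →
      ⁅T (-m) * L m, T (-n) * L n⁆
        = (ginner γ n) • (T (-(m+n)) * L (m+n) - T (-n) * L n)
          - (ginner γ m) • (T (-(m+n)) * L (m+n) - T (-m) * L m)) ∧
    -- (ii)
    (∀ m n s, m ∈ Rgrp h2z k → n ∈ Rgrp h2z k → s ∉ Rgrp h2z k →
      ⁅T (-m) * L m, T (-n) * L (n + s)⁆
        = (ginner γ (n + s)) • (T (-(m+n)) * L (m+n+s)) - (ginner γ n) • (T (-n) * L (n+s))) ∧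
    -- (iii)
    (∀ m n r s, m ∈ Rgrp h2z k → n ∈ Rgrp h2z k → r ∉ Rgrp h2z k → s ∉ Rgrp h2z k →
      (r + s ∉ Rgrp h2z k →
        ⁅T (-m) * L (m + r), T (-n) * L (n + s)⁆
          = (qsigma h2z q r s - qsigma h2z q s r) • (T (-(m+n)) * L (m+n+r+s))) ∧
      (r + s ∈ Rgrp h2z k →
        qsigma h2z q r s = qsigma h2z q s r ∧
        ⁅T (-m) * L (m + r), T (-n) * L (n + s)⁆ = 0)) := by
  obtain ⟨hg1, hg2, hg3⟩ := hg
  obtain ⟨hT, hT0, hLT, hLT0⟩ := hZ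
  have hq1 : ∀ i, q i ^ (k i) = 1 := fun i => (hq i).pow_eq_one
  have gneg : ∀ v : Fin d → ℤ, ginner γ (-v) = - ginner γ v := by
    intro v
    simp [ginner, ← Finset.sum_neg_distrib, mul_neg]
  have gsub : ∀ v w : Fin d → ℤ, ginner γ (v - w) = ginner γ v - ginner γ w := by
    intro v w
    simp [ginner, mul_sub, Finset.sum_sub_distrib]
  -- commutation relations as products
  have com1 : ∀ a b : Fin d → ℤ, a ∈ Rgrp h2z k → b ∈ Rgrp h2z k →
      L a * T b = (ginner γ b) • T (a + b) + T b * L a := by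
    intro a b ha hb
    have h1 := hLT a b ha hb
    rw [Ring.lie_def] at h1
    exact eq_add_of_sub_eq h1
  have com2 : ∀ a b : Fin d → ℤ, a ∉ Rgrp h2z k → b ∈ Rgrp h2z k →
      L a * T b = T b * L a := by
    intro a b ha hb
    have h1 := hLT0 a b ha hb
    rw [Ring.lie_def, sub_eq_zero] at h1
    exact h1
  -- product formulas
  have pA : ∀ a b v : Fin d → ℤ, a ∈ Rgrp h2z k → b ∈ Rgrp h2z k →
      (T (-a) * L a) * (T (-b) * L v)
        = T (-(a+b)) * (L a * L v) - (ginner γ b) • (T (-b) * L v) := by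
    intro a b v ha hb
    have e1 : (T (-a) * L a) * (T (-b) * L v) = T (-a) * (L a * T (-b)) * L v := by
      noncomm_ring
    rw [e1, com1 a (-b) ha ((Rgrp h2z k).neg_mem hb)]
    have e2 : -a + -b = -(a + b) := by abel
    have e3 : -a + (a + -b) = -b := by abel
    have e4 : T (-a) * T (-b) = T (-(a+b)) := by
      rw [hT (-a) (-b) ((Rgrp h2z k).neg_mem ha) ((Rgrp h2z k).neg_mem hb), e2]
    have e5 : T (-a) * T (a + -b) = T (-b) := by
      rw [hT (-a) (a + -b) ((Rgrp h2z k).neg_mem ha)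
        ((Rgrp h2z k).add_mem ha ((Rgrp h2z k).neg_mem hb)), e3]
    rw [gneg, mul_add, add_mul, mul_smul_comm, smul_mul_assoc, e5,
      ← mul_assoc (T (-a)) (T (-b)) (L a), e4, mul_assoc, neg_smul]
    abel
  have pB : ∀ a b u v : Fin d → ℤ, a ∈ Rgrp h2z k → b ∈ Rgrp h2z k → u ∉ Rgrp h2z k →
      (T (-a) * L u) * (T (-b) * L v) = T (-(a+b)) * (L u * L v) := by
    intro a b u v ha hb hu
    have e1 : (T (-a) * L u) * (T (-b) * L v) = T (-a) * (L u * T (-b)) * L v := by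
      noncomm_ring
    rw [e1, com2 u (-b) hu ((Rgrp h2z k).neg_mem hb)]
    have e4 : T (-a) * T (-b) = T (-(a+b)) := by
      rw [hT (-a) (-b) ((Rgrp h2z k).neg_mem ha) ((Rgrp h2z k).neg_mem hb)]
      congr 1; abel
    rw [← mul_assoc, ← mul_assoc, e4, mul_assoc]
  have memAdd : ∀ n s : Fin d → ℤ, n ∈ Rgrp h2z k → s ∉ Rgrp h2z k →
      n + s ∉ Rgrp h2z k := by
    intro n s hn hs hmem
    apply hs
    have := (Rgrp h2z k).sub_mem hmem hn
    simpa using this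
  refine ⟨?_, ?_, ?_⟩
  · -- (i)
    intro m n hm hn
    rw [Ring.lie_def, pA m n n hm hn, pA n m m hn hm]
    have hb := hg1 m n hm hn
    rw [Ring.lie_def, sub_eq_iff_eq_add] at hb
    have key : T (-(m+n)) * (L m * L n)
        = T (-(m+n)) * (L n * L m)
          + (ginner γ n - ginner γ m) • (T (-(m+n)) * L (m+n)) := by
      rw [hb, gsub, mul_add, mul_smul_comm]
      exact add_comm _ _
    have hc : n + m = m + n := by abel
    rw [hc, key]
    module
  · -- (ii)
    intro m n s hm hn hs
    rw [Ring.lie_def, pA m n (n+s) hm hn, pB n m (n+s) m hn hm (memAdd n s hn hs)]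
    have hb := hg2 m (n+s) hm (memAdd n s hn hs)
    rw [Ring.lie_def, sub_eq_iff_eq_add] at hb
    have key : T (-(m+n)) * (L m * L (n+s))
        = T (-(m+n)) * (L (n+s) * L m)
          + (ginner γ (n+s)) • (T (-(m+n)) * L (m+n+s)) := by
      rw [hb, mul_add, mul_smul_comm, show m + (n + s) = m + n + s from by abel]
      exact add_comm _ _
    have hc : n + m = m + n := by abel
    rw [hc, key]
    module
  · -- (iii)
    intro m n r s hm hn hr hs
    have hmr := memAdd m r hm hr
    have hns := memAdd n s hn hs
    have hb := hg3 (m+r) (n+s) hmr hns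
    rw [Ring.lie_def] at hb
    have hσ1 : qsigma h2z q (m+r) (n+s) = qsigma h2z q r s :=
      qsigma_congr h2z k hk q hq1 r s hm hn
    have hσ2 : qsigma h2z q (n+s) (m+r) = qsigma h2z q s r :=
      qsigma_congr h2z k hk q hq1 s r hn hm
    have key : ⁅T (-m) * L (m+r), T (-n) * L (n+s)⁆
        = (qsigma h2z q r s - qsigma h2z q s r) • (T (-(m+n)) * L (m+n+r+s)) := by
      rw [Ring.lie_def, pB m n (m+r) (n+s) hm hn hmr, pB n m (n+s) (m+r) hn hm hns]
      have hc : n + m = m + n := by abel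
      rw [hc, ← mul_sub, hb, hσ1, hσ2, mul_smul_comm,
        show (m + r) + (n + s) = m + n + r + s from by abel]
    constructor
    · intro _
      exact key
    · intro hrs
      have hσ : qsigma h2z q r s = qsigma h2z q s r :=
        qsigma_symm h2z k hk q hq1 hrs
      refine ⟨hσ, ?_⟩
      rw [key, hσ, sub_self, zero_smul]
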